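/- Let 0 < γ < 1 and τ > 0, and set λ = τ^(1-γ) · γ^(-γ) · (1-γ)^(γ-1). For any fixed s ≥ 0 and c > 0, the function θ ↦ θ^(1-1/γ) · c^(1/γ) · s + τθ, defined for θ > 0 (extended appropriately at θ = 0 when s = 0), attains its infimum over θ ≥ 0, and this infimum equals λ · c · s^γ. -/

import Mathlib

open Real

private lemma key_calc (γ τ c s θ : ℝ) (hγ0 : 0 < γ) (hγ1 : γ < 1) (hτ : 0 < τ)
    (hc : 0 < c) (hs : 0 < s) (hθ : 0 < θ) :
    (θ ^ (1 - 1 / γ) * c ^ (1 / γ) * s / γ) ^ γ * (τ * θ / (1 - γ)) ^ (1 - γ)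
      = τ ^ (1 - γ) * γ ^ (-γ) * (1 - γ) ^ (γ - 1) * c * s ^ γ := by
  have h1γ : 0 < 1 - γ := by linarith
  have hγne : γ ≠ 0 := hγ0.ne'
  have e1 : (1 - 1 / γ) * γ = -(1 - γ) := by field_simp; ring
  have e2 : (1 / γ) * γ = 1 := by field_simp
  have e3 : γ - 1 = -(1 - γ) := by ring
  rw [Real.div_rpow (by positivity) hγ0.le, Real.div_rpow (by positivity) h1γ.le,
    Real.mul_rpow (by positivity) hs.le,
    Real.mul_rpow (Real.rpow_pos_of_pos hθ _).le (Real.rpow_pos_of_pos hc _).le,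
    Real.mul_rpow hτ.le hθ.le,
    ← Real.rpow_mul hθ.le, ← Real.rpow_mul hc.le, e1, e2, Real.rpow_one,
    Real.rpow_neg hγ0.le, e3, Real.rpow_neg h1γ.le, Real.rpow_neg hθ.le]
  have ha : (0:ℝ) < θ ^ (1 - γ) := Real.rpow_pos_of_pos hθ _
  have hg : (0:ℝ) < γ ^ γ := Real.rpow_pos_of_pos hγ0 _
  have hh : (0:ℝ) < (1 - γ) ^ (1 - γ) := Real.rpow_pos_of_pos h1γ _
  field_simp

/-- The variational identity underlying the group-bridge reformulation:
for `0 < γ < 1`, `τ > 0` and `λ = τ^(1-γ) γ^(-γ) (1-γ)^(γ-1)`, the function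
`θ ↦ θ^(1-1/γ) c^(1/γ) s + τ θ` on `θ > 0` (extended by value `0` at `θ = 0`
when `s = 0`) attains its infimum over `θ ≥ 0`, and this infimum equals `λ c s^γ`. -/
theorem stmt_0 (γ τ c s : ℝ) (hγ0 : 0 < γ) (hγ1 : γ < 1) (hτ : 0 < τ)
    (hc : 0 < c) (hs : 0 ≤ s)
    (lam : ℝ) (hlam : lam = τ ^ (1 - γ) * γ ^ (-γ) * (1 - γ) ^ (γ - 1)) :
    IsLeast
      {x : ℝ | (∃ θ : ℝ, 0 < θ ∧ x = θ ^ (1 - 1 / γ) * c ^ (1 / γ) * s + τ * θ) ∨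
        (s = 0 ∧ x = 0)}
      (lam * c * s ^ γ) := by
  have h1γ : 0 < 1 - γ := by linarith
  have hγne : γ ≠ 0 := hγ0.ne'
  subst hlam
  constructor
  · rcases hs.eq_or_lt with h0 | hs'
    · exact Or.inr ⟨h0.symm, by rw [← h0, Real.zero_rpow hγne, mul_zero]⟩
    · set A := c ^ (1 / γ) * s with hA
      have hApos : 0 < A := mul_pos (Real.rpow_pos_of_pos hc _) hs'
      set B := (1 - γ) * A / (τ * γ) with hB
      have hBpos : 0 < B := by positivity
      have hθpos : 0 < B ^ γ := Real.rpow_pos_of_pos hBpos _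
      refine Or.inl ⟨B ^ γ, hθpos, ?_⟩
      have hpow : (B ^ γ) ^ (1 - 1 / γ) = B ^ γ * B⁻¹ := by
        rw [← Real.rpow_mul hBpos.le]
        have e : γ * (1 - 1 / γ) = γ + (-1) := by field_simp; ring
        rw [e, Real.rpow_add hBpos, Real.rpow_neg_one]
      have hEq : (B ^ γ) ^ (1 - 1 / γ) * c ^ (1 / γ) * s / γ = τ * B ^ γ / (1 - γ) := by
        rw [hpow, hB]
        field_simp
        ring
      have hE : 0 < τ * B ^ γ / (1 - γ) := by positivity
      have hu : (B ^ γ) ^ (1 - 1 / γ) * c ^ (1 / γ) * s = γ * (τ * B ^ γ / (1 - γ)) := by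
        rw [← hEq]; field_simp
      have hval : (B ^ γ) ^ (1 - 1 / γ) * c ^ (1 / γ) * s + τ * B ^ γ
          = τ * B ^ γ / (1 - γ) := by
        rw [hu]; field_simp; ring
      have hsplit : τ * B ^ γ / (1 - γ)
          = (τ * B ^ γ / (1 - γ)) ^ γ * (τ * B ^ γ / (1 - γ)) ^ (1 - γ) := by
        rw [← Real.rpow_add hE]; simp
      calc τ ^ (1 - γ) * γ ^ (-γ) * (1 - γ) ^ (γ - 1) * c * s ^ γ
          = ((B ^ γ) ^ (1 - 1 / γ) * c ^ (1 / γ) * s / γ) ^ γ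
              * (τ * B ^ γ / (1 - γ)) ^ (1 - γ) :=
            (key_calc γ τ c s (B ^ γ) hγ0 hγ1 hτ hc hs' hθpos).symm
        _ = (τ * B ^ γ / (1 - γ)) ^ γ * (τ * B ^ γ / (1 - γ)) ^ (1 - γ) := by rw [hEq]
        _ = τ * B ^ γ / (1 - γ) := hsplit.symm
        _ = (B ^ γ) ^ (1 - 1 / γ) * c ^ (1 / γ) * s + τ * B ^ γ := hval.symm
  · rintro x (⟨θ, hθ, rfl⟩ | ⟨hs0, rfl⟩)
    · rcases hs.eq_or_lt with h0 | hs'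
      · rw [← h0, Real.zero_rpow hγne]
        simp only [mul_zero, zero_add]
        positivity
      · have amgm := Real.geom_mean_le_arith_mean2_weighted hγ0.le h1γ.le
          (p₁ := θ ^ (1 - 1 / γ) * c ^ (1 / γ) * s / γ) (p₂ := τ * θ / (1 - γ))
          (by positivity) (by positivity) (by ring)
        rw [key_calc γ τ c s θ hγ0 hγ1 hτ hc hs' hθ] at amgm
        have hrhs : γ * (θ ^ (1 - 1 / γ) * c ^ (1 / γ) * s / γ)
            + (1 - γ) * (τ * θ / (1 - γ)) = θ ^ (1 - 1 / γ) * c ^ (1 / γ) * s + τ * θ := by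
          field_simp
        rw [hrhs] at amgm
        exact amgm
    · simp [hs0, Real.zero_rpow hγne]
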